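/- Let δ ≥ 0 and let Γ denote the Gamma function on the right half-plane. Then for all real τ, 1/|Γ(δ+1+iτ)| ≤ e^(C(δ)|τ|²)/Γ(δ+1), where C(δ) = max{(1+δ)^(-2), (1+δ)^(-1)}. -/

import Mathlib

open Real Complex

private lemma aux_sum_shift (x : ℝ) (hx : 1 ≤ x) (n : ℕ) :
    ∑ j ∈ Finset.range n, ((x + 1 + j) ^ 2)⁻¹ ≤ x⁻¹ - (x + n)⁻¹ := by
  induction n with
  | zero => simp
  | succ n ih =>
    rw [Finset.sum_range_succ]
    have h1 : (0:ℝ) < x + n := by positivity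
    have h2 : (0:ℝ) < x + n + 1 := by positivity
    have key : ((x + 1 + n) ^ 2)⁻¹ ≤ (x + n)⁻¹ - (x + n + 1)⁻¹ := by
      have heq : (x + n)⁻¹ - (x + n + 1)⁻¹ = ((x + n) * (x + n + 1))⁻¹ := by
        field_simp
        ring
      rw [heq, inv_le_inv₀ (by positivity) (by positivity)]
      nlinarith
    have hcast : (x + (n + 1 : ℕ))⁻¹ = (x + n + 1)⁻¹ := by push_cast; ring_nf
    rw [hcast]
    linarith

private lemma aux_sum (x : ℝ) (hx : 1 ≤ x) (n : ℕ) :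
    ∑ j ∈ Finset.range (n + 1), ((x + j) ^ 2)⁻¹ ≤ 2 * x⁻¹ := by
  rw [Finset.sum_range_succ']
  have h1 : ∑ j ∈ Finset.range n, ((x + (j + 1 : ℕ)) ^ 2)⁻¹
      = ∑ j ∈ Finset.range n, ((x + 1 + j) ^ 2)⁻¹ := by
    refine Finset.sum_congr rfl fun j _ => ?_
    push_cast; ring_nf
  have h2 := aux_sum_shift x hx n
  have hx0 : (0:ℝ) < x := by linarith
  have h3 : ((x + (0:ℕ)) ^ 2)⁻¹ ≤ x⁻¹ := by
    push_cast
    rw [add_zero]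
    rw [inv_le_inv₀ (by positivity) hx0]
    nlinarith
  have h4 : (0:ℝ) ≤ (x + n)⁻¹ := by positivity
  rw [h1]
  linarith

private lemma aux_prod (x : ℝ) (hx : 1 ≤ x) (t : ℝ) (n : ℕ) :
    ∏ j ∈ Finset.range (n + 1), ((x + j) ^ 2 + t ^ 2) ≤
      Real.exp (2 * x⁻¹ * t ^ 2) * ∏ j ∈ Finset.range (n + 1), (x + j) ^ 2 := by
  have step : ∀ j ∈ Finset.range (n + 1),
      (x + j) ^ 2 + t ^ 2 ≤ Real.exp (t ^ 2 * ((x + j) ^ 2)⁻¹) * (x + j) ^ 2 := by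
    intro j _
    have ha : (0:ℝ) < (x + j) ^ 2 := by positivity
    have h1 : t ^ 2 * ((x + j) ^ 2)⁻¹ + 1 ≤ Real.exp (t ^ 2 * ((x + j) ^ 2)⁻¹) :=
      Real.add_one_le_exp _
    have h2 : (t ^ 2 * ((x + j) ^ 2)⁻¹ + 1) * (x + j) ^ 2 ≤
        Real.exp (t ^ 2 * ((x + j) ^ 2)⁻¹) * (x + j) ^ 2 := by
      gcongr
    have h3 : (t ^ 2 * ((x + j) ^ 2)⁻¹ + 1) * (x + j) ^ 2 = t ^ 2 + (x + j) ^ 2 := by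
      field_simp
    linarith
  calc ∏ j ∈ Finset.range (n + 1), ((x + j) ^ 2 + t ^ 2)
      ≤ ∏ j ∈ Finset.range (n + 1), (Real.exp (t ^ 2 * ((x + j) ^ 2)⁻¹) * (x + j) ^ 2) :=
        Finset.prod_le_prod (fun j _ => by positivity) step
    _ = Real.exp (∑ j ∈ Finset.range (n + 1), t ^ 2 * ((x + j) ^ 2)⁻¹) *
          ∏ j ∈ Finset.range (n + 1), (x + j) ^ 2 := by
        rw [Finset.prod_mul_distrib, Real.exp_sum]
    _ ≤ Real.exp (2 * x⁻¹ * t ^ 2) * ∏ j ∈ Finset.range (n + 1), (x + j) ^ 2 := by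
        gcongr
        rw [← Finset.mul_sum]
        have := aux_sum x hx n
        nlinarith [sq_nonneg t]

/-- Lower bound for the Gamma function along vertical lines:
`1/|Γ(δ+1+iτ)| ≤ e^(C(δ)|τ|²)/Γ(δ+1)` with `C(δ) = max{(1+δ)^(-2), (1+δ)^(-1)}`. -/
theorem stmt_8 (δ : ℝ) (hδ : 0 ≤ δ) (τ : ℝ) :
    1 / ‖Complex.Gamma ((δ : ℂ) + 1 + (τ : ℂ) * Complex.I)‖ ≤
      Real.exp (max ((1 + δ) ^ (-2 : ℤ)) ((1 + δ)⁻¹) * τ ^ 2) / Real.Gamma (δ + 1) := by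
  set x : ℝ := δ + 1 with hxdef
  have hx : (1:ℝ) ≤ x := by simp [hxdef]; linarith
  have hx0 : (0:ℝ) < x := by linarith
  set z : ℂ := (δ : ℂ) + 1 + (τ : ℂ) * Complex.I with hzdef
  have hzre : z.re = x := by simp [hzdef, hxdef]
  -- reduce the max to (1+δ)⁻¹ = x⁻¹
  have hmax : max ((1 + δ) ^ (-2 : ℤ)) ((1 + δ)⁻¹) = x⁻¹ := by
    have h1 : (1 + δ) ^ (-2 : ℤ) = ((1 + δ) ^ 2)⁻¹ := by
      rw [zpow_neg]; norm_cast
    have h2 : ((1 + δ) ^ 2)⁻¹ ≤ (1 + δ)⁻¹ := by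
      rw [inv_le_inv₀ (by positivity) (by positivity)]
      nlinarith
    rw [h1, max_eq_right h2, hxdef, add_comm]
  rw [hmax]
  set E : ℝ := Real.exp (x⁻¹ * τ ^ 2) with hEdef
  have hE0 : 0 < E := Real.exp_pos _
  have hΓz : Complex.Gamma z ≠ 0 := Complex.Gamma_ne_zero_of_re_pos (by rw [hzre]; linarith)
  have habs : 0 < ‖Complex.Gamma z‖ := norm_pos_iff.mpr hΓz
  have hΓx : 0 < Real.Gamma x := Real.Gamma_pos_of_pos hx0
  rw [div_le_div_iff₀ habs hΓx, one_mul]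
  -- main inequality: Γ(x) ≤ E * |Γ z|
  have key : ∀ n : ℕ, 1 ≤ n →
      Real.GammaSeq x n ≤ E * ‖Complex.GammaSeq z n‖ := by
    intro n hn
    have hn0 : (0:ℝ) < (n:ℝ) := by exact_mod_cast hn
    -- abs of complex GammaSeq
    have habsG : ‖Complex.GammaSeq z n‖ =
        (n:ℝ) ^ x * (n.factorial : ℝ) / ∏ j ∈ Finset.range (n + 1), ‖z + j‖ := by
      rw [Complex.GammaSeq, norm_div, norm_mul, norm_prod]
      congr 1
      congr 1
      · have : ((n:ℂ) : ℂ) = (((n:ℝ)) : ℂ) := by push_cast; rfl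
        rw [this, Complex.norm_cpow_eq_rpow_re_of_pos hn0, hzre]
      · simp
    have hP0 : (0:ℝ) < ∏ j ∈ Finset.range (n + 1), (x + j) := by
      apply Finset.prod_pos; intro j _; positivity
    have hQ0 : (0:ℝ) < ∏ j ∈ Finset.range (n + 1), ‖z + j‖ := by
      apply Finset.prod_pos; intro j _
      apply norm_pos_iff.mpr
      intro h
      have : (z + j).re = 0 := by rw [h]; simp
      rw [Complex.add_re, hzre] at this
      simp at this
      nlinarith [this]
    -- Q ≤ E * P
    have hQsq : (∏ j ∈ Finset.range (n + 1), ‖z + j‖) ^ 2 =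
        ∏ j ∈ Finset.range (n + 1), ((x + j) ^ 2 + τ ^ 2) := by
      rw [← Finset.prod_pow]
      refine Finset.prod_congr rfl fun j _ => ?_
      rw [Complex.sq_norm, Complex.normSq_apply, Complex.add_re, Complex.add_im, hzre]
      simp [hzdef]
      ring
    have hQP : (∏ j ∈ Finset.range (n + 1), ‖z + j‖) ≤
        E * ∏ j ∈ Finset.range (n + 1), (x + j) := by
      have hE2 : E ^ 2 = Real.exp (2 * x⁻¹ * τ ^ 2) := by
        rw [hEdef, sq, ← Real.exp_add]; ring_nf
      have hsq : (∏ j ∈ Finset.range (n + 1), ‖z + j‖) ^ 2 ≤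
          (E * ∏ j ∈ Finset.range (n + 1), (x + j)) ^ 2 := by
        rw [hQsq, mul_pow, hE2, ← Finset.prod_pow]
        exact aux_prod x hx τ n
      have h1 := Real.sqrt_le_sqrt hsq
      rwa [Real.sqrt_sq hQ0.le, Real.sqrt_sq (by positivity)] at h1
    -- put together
    rw [Real.GammaSeq, habsG, ← mul_div_assoc, div_le_div_iff₀ hP0 hQ0]
    calc (n:ℝ) ^ x * (n.factorial : ℝ) * ∏ j ∈ Finset.range (n + 1), ‖z + j‖
        ≤ (n:ℝ) ^ x * (n.factorial : ℝ) * (E * ∏ j ∈ Finset.range (n + 1), (x + j)) := by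
          gcongr
      _ = E * ((n:ℝ) ^ x * (n.factorial : ℝ)) * ∏ j ∈ Finset.range (n + 1), (x + j) := by ring
  have htend1 := Real.GammaSeq_tendsto_Gamma x
  have htend2 : Filter.Tendsto (fun n => E * ‖Complex.GammaSeq z n‖)
      Filter.atTop (nhds (E * ‖Complex.Gamma z‖)) :=
    ((continuous_norm.tendsto _).comp (Complex.GammaSeq_tendsto_Gamma z)).const_mul E
  refine le_of_tendsto_of_tendsto htend1 htend2 ?_
  filter_upwards [Filter.eventually_ge_atTop 1] with n hn
  exact key n hn
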